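/- Let u be a run with a liberally atomic set of valid blocks 𝔹 inducing ≺_𝔹 and its saturation ⪻_𝔹. Then: (1) a run is a proper linearization of ≺_𝔹 if and only if it is a proper linearization of ⪻_𝔹; (2) if a run u' is a proper linearization of ≺_𝔹 (equivalently of ⪻_𝔹) and v ≡_M u', then v is a proper linearization of ⪻_𝔹. -/

import Mathlib

namespace TraceTheory

inductive Op : Type
  | rd : Op
  | wr : Op
deriving DecidableEq

structure Lbl (T X : Type) : Type where
  thread : T
  op : Op
  var : X
deriving DecidableEq

/-- A concurrent program run: a finite string over the concurrent alphabet. -/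
abbrev Run (T X : Type) := List (Lbl T X)

/-- An event of a run: a symbol together with its occurrence number. -/
abbrev Event (T X : Type) := Lbl T X × ℕ

variable {T X : Type} [DecidableEq T] [DecidableEq X]

/-- Dependence: same thread, or same variable with at least one write. -/
def Dep (a b : Lbl T X) : Prop :=
  a.thread = b.thread ∨ (a.var = b.var ∧ (a.op = Op.wr ∨ b.op = Op.wr))

/-- The event at position `i` of run `w`. -/
def evAt (w : Run T X) (i : Fin w.length) : Event T X :=
  (w.get i, (w.take (i : ℕ)).count (w.get i))

def HasEv (w : Run T X) (e : Event T X) : Prop := ∃ i : Fin w.length, evAt w i = e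

/-- `e` occurs (strictly) before `f` in `w`. -/
def EvBefore (w : Run T X) (e f : Event T X) : Prop :=
  ∃ i j : Fin w.length, (i : ℕ) < (j : ℕ) ∧ evAt w i = e ∧ evAt w j = f

/-- Program order. -/
def po (w : Run T X) (e f : Event T X) : Prop :=
  e.1.thread = f.1.thread ∧ EvBefore w e f

/-- Reads-from: `f` is a read that observes the write `e` (the last write on
the same variable before `f`). -/
def rf (w : Run T X) (e f : Event T X) : Prop :=
  e.1.op = Op.wr ∧ f.1.op = Op.rd ∧ e.1.var = f.1.var ∧
  ∃ i j : Fin w.length, evAt w i = e ∧ evAt w j = f ∧ (i : ℕ) < (j : ℕ) ∧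
    ∀ k : Fin w.length, (i : ℕ) < (k : ℕ) → (k : ℕ) < (j : ℕ) →
      ¬ ((w.get k).op = Op.wr ∧ (w.get k).var = f.1.var)

/-- Every read is preceded by a write on the same variable. -/
def WellFormed (w : Run T X) : Prop :=
  ∀ j : Fin w.length, (w.get j).op = Op.rd →
    ∃ i : Fin w.length, (i : ℕ) < (j : ℕ) ∧ (w.get i).op = Op.wr ∧
      (w.get i).var = (w.get j).var

/-- Reads-from equivalence. -/
def RfEquiv (w w' : Run T X) : Prop :=
  w.Perm w' ∧ po w = po w' ∧ rf w = rf w'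

/-- A single Mazurkiewicz swap of two adjacent independent symbols. -/
inductive MazSwap : Run T X → Run T X → Prop
  | swap (u v : Run T X) (a b : Lbl T X) (h : ¬ Dep a b) :
      MazSwap (u ++ a :: b :: v) (u ++ b :: a :: v)

/-- Trace (Mazurkiewicz) equivalence: the smallest equivalence closed under swaps. -/
def MazEquiv (w w' : Run T X) : Prop := Relation.EqvGen MazSwap w w'

/-- The trace (happens-before) partial order of a run. -/
def MazOrder (w : Run T X) : Event T X → Event T X → Prop :=
  Relation.TransGen (fun e f => EvBefore w e f ∧ Dep e.1 f.1)

/-- `B` is a block word (one write followed by reads of the same variable) that is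
valid as a contiguous segment whose suffix (remainder of the run) is `s`:
no read after the block reads from the block's write. -/
def ValidBlockSeg (B s : Run T X) : Prop :=
  ∃ a rest, B = a :: rest ∧ a.op = Op.wr ∧
    (∀ b ∈ rest, b.op = Op.rd ∧ b.var = a.var) ∧
    ∀ j : Fin s.length, (s.get j).op = Op.rd → (s.get j).var = a.var →
      ∃ m : Fin s.length, (m : ℕ) < (j : ℕ) ∧ (s.get m).op = Op.wr ∧
        (s.get m).var = a.var

def ThreadsDisjoint (B B' : Run T X) : Prop :=
  ∀ a ∈ B, ∀ b ∈ B', a.thread ≠ b.thread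

/-- A single block-equivalence step (clause (i): block swap, clause (ii): event swap). -/
inductive BlkSwap : Run T X → Run T X → Prop
  | block (p B B' s : Run T X) (hB : ValidBlockSeg B (B' ++ s)) (hB' : ValidBlockSeg B' s)
      (hd : ThreadsDisjoint B B') :
      BlkSwap (p ++ B ++ B' ++ s) (p ++ B' ++ B ++ s)
  | single (p s : Run T X) (a b : Lbl T X) (ht : a.thread ≠ b.thread)
      (h : a.var ≠ b.var ∨ (a.op = Op.rd ∧ b.op = Op.rd)) :
      BlkSwap (p ++ a :: b :: s) (p ++ b :: a :: s)

/-- Block equivalence: smallest reflexive transitive relation closed under the swaps. -/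
def BlkEquiv : Run T X → Run T X → Prop := Relation.ReflTransGen BlkSwap

/-- The set of events of the segment `B` of a run, given the prefix `p` preceding it. -/
def segEvents (p B : Run T X) : Set (Event T X) :=
  { e | ∃ i : Fin B.length, e = (B.get i, ((p ++ B.take (i : ℕ)).count (B.get i))) }

/-- Block-equivalence steps where block swaps are restricted to blocks from `𝔹`. -/
inductive BlkSwapIn (𝔹 : Set (Set (Event T X))) : Run T X → Run T X → Prop
  | block (p B B' s : Run T X) (hB : ValidBlockSeg B (B' ++ s)) (hB' : ValidBlockSeg B' s)
      (hBmem : segEvents p B ∈ 𝔹) (hB'mem : segEvents (p ++ B) B' ∈ 𝔹)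
      (hd : ThreadsDisjoint B B') :
      BlkSwapIn 𝔹 (p ++ B ++ B' ++ s) (p ++ B' ++ B ++ s)
  | single (p s : Run T X) (a b : Lbl T X) (ht : a.thread ≠ b.thread)
      (h : a.var ≠ b.var ∨ (a.op = Op.rd ∧ b.op = Op.rd)) :
      BlkSwapIn 𝔹 (p ++ a :: b :: s) (p ++ b :: a :: s)

/-- Block equivalence restricted to the set of blocks `𝔹`. -/
def BlkEquivIn (𝔹 : Set (Set (Event T X))) : Run T X → Run T X → Prop :=
  Relation.ReflTransGen (BlkSwapIn 𝔹)

/-- A valid block of `w` (as a set of events): a write event together with exactly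
the reads of `w` that read from it. -/
def IsValidBlockOf (w : Run T X) (S : Set (Event T X)) : Prop :=
  ∃ e : Event T X, HasEv w e ∧ e.1.op = Op.wr ∧ S = insert e { f | rf w e f }

def ValidBlocks (w : Run T X) (𝔹 : Set (Set (Event T X))) : Prop :=
  ∀ S ∈ 𝔹, IsValidBlockOf w S

/-- Block `S` occurs as a contiguous subword of `u`. -/
def SerialIn (u : Run T X) (S : Set (Event T X)) : Prop :=
  ∃ p B s, u = p ++ B ++ s ∧ segEvents p B = S

/-- Liberal atomicity of a run `v` with respect to a set of blocks `𝔹`. -/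
def LiberallyAtomic (v : Run T X) (𝔹 : Set (Set (Event T X))) : Prop :=
  ∃ u, BlkEquivIn 𝔹 u v ∧ ∀ S ∈ 𝔹, SerialIn u S

/-- Conflict serializability of a run `v` with respect to a set of blocks `𝔹`. -/
def ConflictSerializable (v : Run T X) (𝔹 : Set (Set (Event T X))) : Prop :=
  ∃ u, MazEquiv u v ∧ ∀ S ∈ 𝔹, SerialIn u S

/-- The block-happens-before order `≺_𝔹`. -/
def Bhb (w : Run T X) (𝔹 : Set (Set (Event T X))) : Event T X → Event T X → Prop :=
  Relation.TransGen (fun e f =>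
    EvBefore w e f ∧ Dep e.1 f.1 ∧
    ¬ (e.1.thread ≠ f.1.thread ∧ ∃ B ∈ 𝔹, ∃ B' ∈ 𝔹, B ≠ B' ∧ e ∈ B ∧ f ∈ B'))

/-- The saturated order `⪻_𝔹` on events (`Sum.inl`) and blocks (`Sum.inr`). -/
inductive Sat (w : Run T X) (𝔹 : Set (Set (Event T X))) :
    (Event T X ⊕ Set (Event T X)) → (Event T X ⊕ Set (Event T X)) → Prop
  | base {e f : Event T X} : Bhb w 𝔹 e f → Sat w 𝔹 (Sum.inl e) (Sum.inl f)
  | toBlk {e f : Event T X} {B B' : Set (Event T X)} :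
      e.1.var = f.1.var → B ∈ 𝔹 → B' ∈ 𝔹 → e ∈ B → f ∈ B' → B ≠ B' →
      Sat w 𝔹 (Sum.inl e) (Sum.inl f) → Sat w 𝔹 (Sum.inr B) (Sum.inr B')
  | ofBlk {B B' : Set (Event T X)} {e f : Event T X} :
      Sat w 𝔹 (Sum.inr B) (Sum.inr B') → e ∈ B → f ∈ B' →
      Sat w 𝔹 (Sum.inl e) (Sum.inl f)

/-- The event part of the saturated order `⪻_𝔹`. -/
def SatEv (w : Run T X) (𝔹 : Set (Set (Event T X))) (e f : Event T X) : Prop :=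
  Sat w 𝔹 (Sum.inl e) (Sum.inl f)

def SameVarBlocks (B B' : Set (Event T X)) : Prop :=
  ∃ x : X, (∀ e ∈ B, e.1.var = x) ∧ (∀ e ∈ B', e.1.var = x)

/-- No two distinct blocks of `𝔹` on the same variable overlap in `v`. -/
def NoOverlap (v : Run T X) (𝔹 : Set (Set (Event T X))) : Prop :=
  ∀ B ∈ 𝔹, ∀ B' ∈ 𝔹, B ≠ B' → SameVarBlocks B B' →
    (∀ e ∈ B, ∀ f ∈ B', EvBefore v e f) ∨ (∀ e ∈ B, ∀ f ∈ B', EvBefore v f e)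

/-- `v` is a proper linearization (of the events of `w`) of the order `ord`. -/
def ProperLin (w : Run T X) (𝔹 : Set (Set (Event T X)))
    (ord : Event T X → Event T X → Prop) (v : Run T X) : Prop :=
  w.Perm v ∧ (∀ e f, ord e f → EvBefore v e f) ∧ NoOverlap v 𝔹


/-- `e` is causally ordered before `f` under reads-from equivalence:
`e` occurs before `f` in every reads-from equivalent run. -/
def CausOrd (w : Run T X) (e f : Event T X) : Prop :=
  ∀ w', RfEquiv w w' → EvBefore w' e f

/-- `e` and `f` are causally concurrent under reads-from equivalence. -/
def CausConc (w : Run T X) (e f : Event T X) : Prop :=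
  ¬ CausOrd w e f ∧ ¬ CausOrd w f e

set_option linter.unusedSectionVars false
set_option linter.unusedVariables false

variable {T X : Type} [DecidableEq T] [DecidableEq X]

lemma count_take_lt {w : Run T X} {i j : Fin w.length} (hij : (i:ℕ) < (j:ℕ))
    (hg : w.get i = w.get j) :
    (w.take (i:ℕ)).count (w.get i) < (w.take (j:ℕ)).count (w.get j) := by
  have h1 : w.take ((i:ℕ)+1) = w.take (i:ℕ) ++ [w.get i] := by
    rw [List.take_succ, List.getElem?_eq_getElem i.isLt]; rfl
  have h2 : w.take ((i:ℕ)+1) <+: w.take (j:ℕ) :=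
    List.take_isPrefix_take.mpr (Or.inl hij)
  have h3 := h2.count_le (w.get i)
  rw [h1, List.count_append] at h3
  rw [← hg]
  simpa using h3

lemma evAt_inj {w : Run T X} {i j : Fin w.length} (h : evAt w i = evAt w j) : i = j := by
  have hg : w.get i = w.get j := congrArg Prod.fst h
  have hc : (w.take (i:ℕ)).count (w.get i) = (w.take (j:ℕ)).count (w.get j) := by
    have := congrArg Prod.snd h
    simpa [evAt] using this
  rcases lt_trichotomy (i:ℕ) (j:ℕ) with hlt | heq | hgt
  · exact absurd hc (Nat.ne_of_lt (count_take_lt hlt hg))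
  · exact Fin.ext heq
  · exact absurd hc.symm (Nat.ne_of_lt (count_take_lt hgt hg.symm))

lemma evBefore_trans {w : Run T X} {e f g : Event T X}
    (h1 : EvBefore w e f) (h2 : EvBefore w f g) : EvBefore w e g := by
  obtain ⟨i, j, hij, hi, hj⟩ := h1
  obtain ⟨i', j', hij', hi', hj'⟩ := h2
  have : j = i' := evAt_inj (hj.trans hi'.symm)
  exact ⟨i, j', by omega, hi, hj'⟩

lemma evBefore_asymm {w : Run T X} {e f : Event T X}
    (h1 : EvBefore w e f) (h2 : EvBefore w f e) : False := by
  obtain ⟨i, j, hij, hi, hj⟩ := h1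
  obtain ⟨i', j', hij', hi', hj'⟩ := h2
  have h3 : j = i' := evAt_inj (hj.trans hi'.symm)
  have h4 : j' = i := evAt_inj (hj'.trans hi.symm)
  omega

lemma dep_symm {a b : Lbl T X} (h : Dep a b) : Dep b a := by
  rcases h with h | ⟨h1, h2⟩
  · exact Or.inl h.symm
  · exact Or.inr ⟨h1.symm, h2.symm⟩

lemma evAt_fst {w : Run T X} (i : Fin w.length) : (evAt w i).1 = w.get i := rfl
lemma count_swap (c a b : Lbl T X) (p t : List (Lbl T X)) :
    (p ++ a :: b :: t).count c = (p ++ b :: a :: t).count c := by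
  simp [List.count_append, List.count_cons]
  omega

lemma swap_occ {p s : Run T X} {a b : Lbl T X} (hab : a ≠ b) (i : Fin (p ++ a :: b :: s).length) :
    ∃ j : Fin (p ++ b :: a :: s).length,
      evAt (p ++ b :: a :: s) j = evAt (p ++ a :: b :: s) i ∧
      (((i:ℕ) < p.length ∨ p.length + 1 < (i:ℕ)) → (j:ℕ) = (i:ℕ)) ∧
      ((i:ℕ) = p.length → (j:ℕ) = p.length + 1) ∧
      ((i:ℕ) = p.length + 1 → (j:ℕ) = p.length) := by
  set n := p.length with hn
  have hilt := i.isLt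
  simp only [List.length_append, List.length_cons] at hilt
  rcases lt_trichotomy (i:ℕ) n with hlt | heq | hgt
  · refine ⟨⟨(i:ℕ), by simp only [List.length_append, List.length_cons]; omega⟩, ?_, fun _ => rfl, by omega, by omega⟩
    simp only [evAt, List.get_eq_getElem]
    rw [List.getElem_append_left hlt, List.getElem_append_left hlt,
      List.take_append_of_le_length (by omega), List.take_append_of_le_length (by omega)]
  · refine ⟨⟨n + 1, by simp; omega⟩, ?_, by omega, fun _ => rfl, by omega⟩
    simp only [evAt, List.get_eq_getElem]
    have g1 : (p ++ b :: a :: s)[n + 1]'(by simp; omega) = a := by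
      rw [List.getElem_append_right (by omega)]
      simp [hn]
    have g2 : (p ++ a :: b :: s)[(i:ℕ)]'(i.isLt) = a := by
      rw [List.getElem_append_right (by omega)]
      have : (i:ℕ) - p.length = 0 := by omega
      simp [this]
    have t1 : (p ++ b :: a :: s).take (n + 1) = p ++ [b] := by
      rw [List.take_append, List.take_of_length_le (by omega)]
      simp [hn]
    have t2 : (p ++ a :: b :: s).take (i:ℕ) = p := by
      rw [heq, List.take_append, List.take_of_length_le (by omega)]
      simp [hn]
    rw [g1, g2, t1, t2, List.count_append]
    simp [List.count_cons, hab.symm]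
  · rcases Nat.lt_or_ge (i:ℕ) (n+2) with h2 | h2
    · -- i = n + 1, j = n
      have heq : (i:ℕ) = n + 1 := by omega
      refine ⟨⟨n, by simp only [List.length_append, List.length_cons]; omega⟩, ?_, by omega, by omega, fun _ => rfl⟩
      simp only [evAt, List.get_eq_getElem]
      have g1 : (p ++ b :: a :: s)[n]'(by simp only [List.length_append, List.length_cons]; omega) = b := by
        rw [List.getElem_append_right (by omega)]
        have h0 : n - p.length = 0 := by omega
        simp [h0]
      have g2 : (p ++ a :: b :: s)[(i:ℕ)]'(i.isLt) = b := by
        rw [List.getElem_append_right (by omega)]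
        have h3 : (i:ℕ) - p.length = 0 + 1 := by omega
        simp only [h3, List.getElem_cons_succ, List.getElem_cons_zero]
      have t1 : (p ++ b :: a :: s).take n = p := by
        rw [List.take_append, List.take_of_length_le (by omega)]
        simp [hn]
      have t2 : (p ++ a :: b :: s).take (i:ℕ) = p ++ [a] := by
        rw [heq, List.take_append, List.take_of_length_le (by omega)]
        simp [hn]
      rw [g1, g2, t1, t2, List.count_append]
      simp [List.count_cons, hab]
    · -- i ≥ n + 2
      refine ⟨⟨(i:ℕ), by simp only [List.length_append, List.length_cons]; omega⟩, ?_, fun _ => rfl, by omega, by omega⟩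
      simp only [evAt, List.get_eq_getElem]
      obtain ⟨k, hk, hks⟩ : ∃ k, (i:ℕ) - p.length = k + 1 + 1 ∧ k < s.length :=
        ⟨(i:ℕ) - n - 2, by omega, by omega⟩
      have g1 : (p ++ b :: a :: s)[(i:ℕ)]'(by simp only [List.length_append, List.length_cons]; omega) = s[k]'hks := by
        rw [List.getElem_append_right (by omega)]
        simp only [hk, List.getElem_cons_succ]
      have g2 : (p ++ a :: b :: s)[(i:ℕ)]'(i.isLt) = s[k]'hks := by
        rw [List.getElem_append_right (by omega)]
        simp only [hk, List.getElem_cons_succ]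
      have t1 : (p ++ b :: a :: s).take (i:ℕ) = p ++ b :: a :: s.take k := by
        rw [List.take_append, List.take_of_length_le (by omega), hk]
        simp
      have t2 : (p ++ a :: b :: s).take (i:ℕ) = p ++ a :: b :: s.take k := by
        rw [List.take_append, List.take_of_length_le (by omega), hk]
        simp
      rw [g1, g2, t1, t2]
      exact congrArg _ (count_swap _ b a p _)
lemma mazSwap_preserve {w w' : Run T X} (hsw : MazSwap w w') {e f : Event T X}
    (hb : EvBefore w e f) (hd : Dep e.1 f.1) : EvBefore w' e f := by
  obtain ⟨p, s, a, b, hnd⟩ := hsw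
  have hab : a ≠ b := fun h => hnd (Or.inl (h ▸ rfl))
  obtain ⟨i, j, hij, hi, hj⟩ := hb
  obtain ⟨i', hi', hiA, hiB, hiC⟩ := swap_occ hab i
  obtain ⟨j', hj', hjA, hjB, hjC⟩ := swap_occ hab j
  set n := p.length with hn
  refine ⟨i', j', ?_, hi'.trans hi, hj'.trans hj⟩
  by_cases hie : (i:ℕ) = n
  · by_cases hje : (j:ℕ) = n + 1
    · -- the swapped pair: e.1 = a, f.1 = b, contradiction with Dep
      exfalso
      apply hnd
      have ha : e.1 = a := by
        rw [← hi]
        simp only [evAt_fst, List.get_eq_getElem]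
        rw [List.getElem_append_right (by omega)]
        have h0 : (i:ℕ) - p.length = 0 := by omega
        simp [h0]
      have hbb : f.1 = b := by
        rw [← hj]
        simp only [evAt_fst, List.get_eq_getElem]
        rw [List.getElem_append_right (by omega)]
        have h0 : (j:ℕ) - p.length = 0 + 1 := by omega
        simp only [h0, List.getElem_cons_succ, List.getElem_cons_zero]
      rw [← ha, ← hbb]; exact hd
    · have hj'' : (j':ℕ) = (j:ℕ) ∨ ((j:ℕ) = n ∧ (j':ℕ) = n + 1) := by
        by_cases h : (j:ℕ) = n
        · exact Or.inr ⟨h, hjB h⟩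
        · exact Or.inl (hjA (by omega))
      have hi'' : (i':ℕ) = n + 1 := hiB hie
      omega
  · by_cases hie2 : (i:ℕ) = n + 1
    · have : (i':ℕ) = n := hiC hie2
      have : (j':ℕ) = (j:ℕ) ∨ (j':ℕ) = n + 1 ∨ ((j:ℕ) = n + 1 ∧ (j':ℕ) = n) := by
        by_cases h1 : (j:ℕ) = n
        · exact Or.inr (Or.inl (hjB h1))
        · by_cases h2 : (j:ℕ) = n + 1
          · exact Or.inr (Or.inr ⟨h2, hjC h2⟩)
          · exact Or.inl (hjA (by omega))
      omega
    · have hii : (i':ℕ) = (i:ℕ) := hiA (by omega)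
      have : (j':ℕ) = (j:ℕ) ∨ (j':ℕ) = n + 1 ∨ ((j:ℕ) = n + 1 ∧ (j':ℕ) = n) := by
        by_cases h1 : (j:ℕ) = n
        · exact Or.inr (Or.inl (hjB h1))
        · by_cases h2 : (j:ℕ) = n + 1
          · exact Or.inr (Or.inr ⟨h2, hjC h2⟩)
          · exact Or.inl (hjA (by omega))
      omega

lemma mazSwap_symm {w w' : Run T X} (h : MazSwap w w') : MazSwap w' w := by
  obtain ⟨p, s, a, b, hnd⟩ := h
  exact MazSwap.swap p s b a (fun hd => hnd (dep_symm hd))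

lemma mazSwap_perm {w w' : Run T X} (h : MazSwap w w') : w.Perm w' := by
  obtain ⟨p, s, a, b, hnd⟩ := h
  exact List.Perm.append_left p (List.Perm.swap b a s)

lemma mazEquiv_perm {w w' : Run T X} (h : MazEquiv w w') : w.Perm w' := by
  induction h with
  | rel x y hxy => exact mazSwap_perm hxy
  | refl => exact List.Perm.refl _
  | symm x y _ ih => exact ih.symm
  | trans x y z _ _ ih1 ih2 => exact ih1.trans ih2

lemma mazEquiv_preserve {w w' : Run T X} (h : MazEquiv w w') :
    (∀ e f : Event T X, EvBefore w e f → Dep e.1 f.1 → EvBefore w' e f) ∧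
    (∀ e f : Event T X, EvBefore w' e f → Dep e.1 f.1 → EvBefore w e f) := by
  induction h with
  | rel x y hxy =>
      exact ⟨fun e f hb hd => mazSwap_preserve hxy hb hd,
        fun e f hb hd => mazSwap_preserve (mazSwap_symm hxy) hb hd⟩
  | refl => exact ⟨fun _ _ hb _ => hb, fun _ _ hb _ => hb⟩
  | symm x y _ ih => exact ⟨ih.2, ih.1⟩
  | trans x y z _ _ ih1 ih2 =>
      exact ⟨fun e f hb hd => ih2.1 e f (ih1.1 e f hb hd) hd,
        fun e f hb hd => ih1.2 e f (ih2.2 e f hb hd) hd⟩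
lemma rf_unique {u : Run T X} {e e' f : Event T X} (h : rf u e f) (h' : rf u e' f) :
    e = e' := by
  obtain ⟨hw, hr, hv, i, j, hi, hj, hij, hmid⟩ := h
  obtain ⟨hw', hr', hv', i', j', hi', hj', hij', hmid'⟩ := h'
  have hjj : j = j' := evAt_inj (hj.trans hj'.symm)
  subst hjj
  have gi : u.get i = e.1 := congrArg Prod.fst hi
  have gi' : u.get i' = e'.1 := congrArg Prod.fst hi'
  rcases lt_trichotomy (i:ℕ) (i':ℕ) with hlt | heq | hgt
  · exact absurd ⟨gi' ▸ hw', gi' ▸ hv'⟩ (hmid i' hlt hij')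
  · rw [← hi, ← hi']; congr 1; exact Fin.ext heq
  · exact absurd ⟨gi ▸ hw, gi ▸ hv⟩ (hmid' i hgt hij)

lemma op_ne : Op.wr ≠ Op.rd := by simp

/-- Any block containing a given write `g` is the block of `g`. -/
lemma block_of_write {u : Run T X} {S : Set (Event T X)} {g : Event T X}
    (h : IsValidBlockOf u S) (hg : g ∈ S) (hgw : g.1.op = Op.wr) :
    S = insert g {f | rf u g f} := by
  obtain ⟨e, _, hew, hSeq⟩ := h
  have : g = e := by
    rcases hSeq ▸ hg with h1 | h2
    · exact h1
    · exact absurd (h2 : rf u e g).2.1 (by rw [hgw]; exact op_ne)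
  rw [hSeq, this]

/-- Any block containing a read `g` of write `w0` is the block of `w0`. -/
lemma block_of_read {u : Run T X} {S : Set (Event T X)} {g w0 : Event T X}
    (h : IsValidBlockOf u S) (hg : g ∈ S) (hrf : rf u w0 g) :
    S = insert w0 {f | rf u w0 f} := by
  obtain ⟨e, _, hew, hSeq⟩ := h
  rcases hSeq ▸ hg with h1 | h2
  · exact absurd (h1 ▸ hew : g.1.op = Op.wr) (by rw [hrf.2.1]; simp)
  · have : e = w0 := rf_unique (h2 : rf u e g) hrf
    rw [hSeq, this]

/-- Every event of a valid block has the variable of its write. -/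
lemma block_vars {u : Run T X} {S : Set (Event T X)} (h : IsValidBlockOf u S) :
    ∃ w0 : Event T X, w0 ∈ S ∧ w0.1.op = Op.wr ∧ S = insert w0 {f | rf u w0 f} ∧
      ∀ g ∈ S, g.1.var = w0.1.var := by
  obtain ⟨e, _, hew, hSeq⟩ := h
  refine ⟨e, hSeq ▸ Set.mem_insert _ _, hew, hSeq, ?_⟩
  intro g hg
  rcases hSeq ▸ hg with h1 | h2
  · rw [h1]
  · exact ((h2 : rf u e g).2.2.1).symm

lemma transGen_evBefore {v : Run T X} {r : Event T X → Event T X → Prop}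
    (h : ∀ e f, r e f → EvBefore v e f) :
    ∀ e f, Relation.TransGen r e f → EvBefore v e f := by
  intro e f htg
  induction htg with
  | single hr => exact h _ _ hr
  | tail _ hr ih => exact evBefore_trans ih (h _ _ hr)

lemma sameVarBlocks_symm {B B' : Set (Event T X)} (h : SameVarBlocks B B') :
    SameVarBlocks B' B := by
  obtain ⟨x, h1, h2⟩ := h
  exact ⟨x, h2, h1⟩

lemma sat_preserve {u v : Run T X} {𝔹 : Set (Set (Event T X))} (hval : ValidBlocks u 𝔹)
    (hord : ∀ e f, Bhb u 𝔹 e f → EvBefore v e f) (hno : NoOverlap v 𝔹) :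
    ∀ x y, Sat u 𝔹 x y →
      (∀ e f : Event T X, x = Sum.inl e → y = Sum.inl f → EvBefore v e f) ∧
      (∀ B B' : Set (Event T X), x = Sum.inr B → y = Sum.inr B' →
        ∀ e ∈ B, ∀ f ∈ B', EvBefore v e f) := by
  intro x y hxy
  induction hxy with
  | @base e0 f0 hbf =>
      refine ⟨?_, ?_⟩
      · rintro e f he hf
        cases he; cases hf
        exact hord _ _ hbf
      · rintro B B' hB hB'
        cases hB
  | @toBlk e0 f0 B0 B'0 hvv hB hB' heB hfB' hne _ ih =>
      refine ⟨?_, ?_⟩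
      · rintro e f he hf
        cases he
      · rintro B B' hB hB'
        cases hB; cases hB'
        have hef : EvBefore v e0 f0 := ih.1 e0 f0 rfl rfl
        obtain ⟨wB, hwB, _, _, hvarB⟩ := block_vars (hval B0 hB)
        obtain ⟨wB', hwB', _, _, hvarB'⟩ := block_vars (hval B'0 hB')
        have hsv : SameVarBlocks B0 B'0 := by
          refine ⟨wB.1.var, hvarB, ?_⟩
          intro g hg
          rw [hvarB' g hg, ← hvarB' f0 hfB', ← hvv, hvarB e0 heB]
        rcases hno B0 hB B'0 hB' hne hsv with hall | hall
        · exact hall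
        · exact absurd hef (fun h0 => evBefore_asymm h0 (hall e0 heB f0 hfB'))
  | @ofBlk B0 B'0 e0 f0 _ heB hfB' ih =>
      refine ⟨?_, ?_⟩
      · rintro e f he hf
        cases he; cases hf
        exact ih.2 B0 B'0 rfl rfl e0 heB f0 hfB'
      · rintro B B' hB hB'
        cases hB
lemma block_transfer {u u' v : Run T X} {𝔹 : Set (Set (Event T X))}
    (hval : ValidBlocks u 𝔹) {B B' : Set (Event T X)} (hB' : B' ∈ 𝔹)
    (hsv : SameVarBlocks B B')
    (hord : ∀ e ∈ B, ∀ f ∈ B', EvBefore u' e f)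
    (hmaz : ∀ e f : Event T X, EvBefore u' e f → Dep e.1 f.1 → EvBefore v e f)
    (hbhb : ∀ e f, Bhb u 𝔹 e f → EvBefore v e f) :
    ∀ e ∈ B, ∀ f ∈ B', EvBefore v e f := by
  obtain ⟨x, hxB, hxB'⟩ := hsv
  obtain ⟨w0, hw0mem, hw0wr, hBeq, _⟩ := block_vars (hval B' hB')
  intro e heB f hfB'
  have h1 : EvBefore u' e w0 := hord e heB w0 hw0mem
  have hdep1 : Dep e.1 w0.1 :=
    Or.inr ⟨(hxB e heB).trans (hxB' w0 hw0mem).symm, Or.inr hw0wr⟩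
  have h2 : EvBefore v e w0 := hmaz _ _ h1 hdep1
  rcases hBeq ▸ hfB' with hfe | hfrf
  · exact hfe ▸ h2
  · have hrf : rf u w0 f := hfrf
    have hbase : Bhb u 𝔹 w0 f := by
      apply Relation.TransGen.single
      obtain ⟨hwop, hrop, hvv, i, j, hi, hj, hij, -⟩ := id hrf
      refine ⟨⟨i, j, hij, hi, hj⟩, Or.inr ⟨hvv, Or.inl hwop⟩, ?_⟩
      rintro ⟨hth, B1, hB1, B2, hB2, hne12, hw0B1, hfB2⟩
      apply hne12
      rw [block_of_write (hval B1 hB1) hw0B1 hw0wr,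
        block_of_read (hval B2 hB2) hfB2 hrf]
    exact evBefore_trans h2 (hbhb _ _ hbase)
/-- (1) proper linearizations of `≺_𝔹` and of its saturation
`⪻_𝔹` coincide; (2) if `u'` is a proper linearization of `≺_𝔹` and `v ≡_M u'`,
then `v` is a proper linearization of `⪻_𝔹`. -/
theorem proper_linearizations_of_saturation
    (T X : Type) [DecidableEq T] [DecidableEq X]
    (u : Run T X) (𝔹 : Set (Set (Event T X)))
    (hval : ValidBlocks u 𝔹) (hla : LiberallyAtomic u 𝔹) :
    (∀ v : Run T X, ProperLin u 𝔹 (Bhb u 𝔹) v ↔ ProperLin u 𝔹 (SatEv u 𝔹) v) ∧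
    (∀ u' v : Run T X, ProperLin u 𝔹 (Bhb u 𝔹) u' → MazEquiv u' v →
        ProperLin u 𝔹 (SatEv u 𝔹) v) := by
  constructor
  · intro v
    constructor
    · rintro ⟨hperm, hord, hno⟩
      refine ⟨hperm, ?_, hno⟩
      intro e f hsat
      exact (sat_preserve hval hord hno _ _ hsat).1 e f rfl rfl
    · rintro ⟨hperm, hord, hno⟩
      exact ⟨hperm, fun e f h => hord e f (Sat.base h), hno⟩
  · rintro u' v ⟨hperm, hord, hno⟩ hmz
    have hpres := (mazEquiv_preserve hmz).1
    have hordv : ∀ e f, Bhb u 𝔹 e f → EvBefore v e f := by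
      refine transGen_evBefore ?_
      rintro e f ⟨hbf, hdep, hexc⟩
      exact hpres e f (hord e f (Relation.TransGen.single ⟨hbf, hdep, hexc⟩)) hdep
    have hnov : NoOverlap v 𝔹 := by
      intro B hB B' hB' hne hsv
      rcases hno B hB B' hB' hne hsv with hall | hall
      · exact Or.inl (block_transfer hval hB' hsv hall hpres hordv)
      · refine Or.inr ?_
        have := block_transfer hval hB (sameVarBlocks_symm hsv)
          (fun e he f hf => hall f hf e he) hpres hordv
        exact fun e he f hf => this f hf e he
    refine ⟨hperm.trans (mazEquiv_perm hmz), ?_, hnov⟩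
    intro e f hsat
    exact (sat_preserve hval hordv hnov _ _ hsat).1 e f rfl rfl

end TraceTheory
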